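/- If [g], [h] ∈ Λ_G/≈ are distinct, then 𝒜_{[g]}·𝒜_{[h]} = 0. -/
import Mathlib


open Submodule

section
variable {G : Type*} [CommGroup G]

/-- A chain connection: a nonempty list `c` starting at `g`, with all entries in
`Main ∪ Other`, all proper partial products in `Main`, and total product `g'` or `g'⁻¹`. -/
def ChainConnected (Main Other : Set G) (g g' : G) : Prop :=
  ∃ c : List G, c ≠ [] ∧ c.head? = some g ∧
    (∀ k ∈ c, k ∈ Main ∪ Other) ∧
    (∀ i : ℕ, 0 < i → i < c.length → (c.take i).prod ∈ Main) ∧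
    (c.prod = g' ∨ c.prod = g'⁻¹)

end

/-- A `G`-graded Lie-Rinehart algebra `(L, A)` over a field `F`. -/
structure GradedLieRinehart (F : Type*) [Field F] (G : Type*) [CommGroup G] [DecidableEq G]
    (A : Type*) [CommRing A] [Algebra F A]
    (L : Type*) [LieRing L] [LieAlgebra F L] [Module A L] [IsScalarTower F A L] where
  ρ : L →ₗ[F] Derivation F A A
  ρ_smul : ∀ (a : A) (v : L) (b : A), ρ (a • v) b = a * ρ v b
  ρ_bracket : ∀ v w : L, ρ ⁅v, w⁆ = ⁅ρ v, ρ w⁆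
  leibniz : ∀ (v w : L) (a : A), ⁅v, a • w⁆ = a • ⁅v, w⁆ + (ρ v a) • w
  𝓛 : G → Submodule F L
  𝓐 : G → Submodule F A
  internalL : DirectSum.IsInternal 𝓛
  internalA : DirectSum.IsInternal 𝓐
  bracket_mem : ∀ {g h : G} {v w : L}, v ∈ 𝓛 g → w ∈ 𝓛 h → ⁅v, w⁆ ∈ 𝓛 (g * h)
  mul_mem : ∀ {g h : G} {a b : A}, a ∈ 𝓐 g → b ∈ 𝓐 h → a * b ∈ 𝓐 (g * h)
  smul_mem : ∀ {h g : G} {a : A} {v : L}, a ∈ 𝓐 h → v ∈ 𝓛 g → a • v ∈ 𝓛 (h * g)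
  rho_mem : ∀ {g h : G} {v : L} {a : A}, v ∈ 𝓛 g → a ∈ 𝓐 h → ρ v a ∈ 𝓐 (g * h)

namespace GradedLieRinehart

variable {F : Type*} [Field F] {G : Type*} [CommGroup G] [DecidableEq G]
  {A : Type*} [CommRing A] [Algebra F A]
  {L : Type*} [LieRing L] [LieAlgebra F L] [Module A L] [IsScalarTower F A L]
variable (𝔏 : GradedLieRinehart F G A L)

/-- The support `Σ_G` of the grading of `L`. -/
def SuppL : Set G := {g | g ≠ 1 ∧ 𝔏.𝓛 g ≠ ⊥}

/-- The support `Λ_G` of the grading of `A`. -/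
def SuppA : Set G := {g | g ≠ 1 ∧ 𝔏.𝓐 g ≠ ⊥}

/-- `Σ_G^± = Σ_G ∪ Σ_G⁻¹`. -/
def Spm : Set G := {g | g ∈ 𝔏.SuppL ∨ g⁻¹ ∈ 𝔏.SuppL}

/-- `Λ_G^± = Λ_G ∪ Λ_G⁻¹`. -/
def Lpm : Set G := {g | g ∈ 𝔏.SuppA ∨ g⁻¹ ∈ 𝔏.SuppA}

/-- `g` is `Σ_G`-connected to `g'`. -/
def SigmaConnected (g g' : G) : Prop := ChainConnected 𝔏.Spm 𝔏.Lpm g g'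

/-- `g` is `Λ_G`-connected to `g'`. -/
def LambdaConnected (g g' : G) : Prop := ChainConnected (𝔏.Lpm ∪ 𝔏.Spm) (∅ : Set G) g g'

/-- The span of products `A_h • L_g`. -/
def smulSub (h g : G) : Submodule F L :=
  Submodule.span F {x | ∃ a ∈ 𝔏.𝓐 h, ∃ v ∈ 𝔏.𝓛 g, x = a • v}

/-- The span of brackets `[L_h, L_g]`. -/
def bracketSub (h g : G) : Submodule F L :=
  Submodule.span F {x | ∃ v ∈ 𝔏.𝓛 h, ∃ w ∈ 𝔏.𝓛 g, x = ⁅v, w⁆}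

/-- `L_{[g],1}`. -/
def L1class (g : G) : Submodule F L :=
  (⨆ g' ∈ {g' | g' ∈ 𝔏.SuppL ∧ 𝔏.SigmaConnected g g' ∧ g' ∈ 𝔏.SuppA}, 𝔏.smulSub g'⁻¹ g') ⊔
  (⨆ g' ∈ {g' | g' ∈ 𝔏.SuppL ∧ 𝔏.SigmaConnected g g'}, 𝔏.bracketSub g'⁻¹ g')

/-- `V_{[g]}`. -/
def Vclass (g : G) : Submodule F L :=
  ⨆ g' ∈ {g' | g' ∈ 𝔏.SuppL ∧ 𝔏.SigmaConnected g g'}, 𝔏.𝓛 g'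

/-- The ideal `I_{[g]} = L_{[g],1} ⊕ V_{[g]}` attached to the class of `g`. -/
def Iclass (g : G) : Submodule F L := 𝔏.L1class g ⊔ 𝔏.Vclass g

/-- `Σ_{g ∈ Σ_G ∩ Λ_G} A_{g⁻¹} L_g + Σ_{g ∈ Σ_G} [L_{g⁻¹}, L_g]`. -/
def L1full : Submodule F L :=
  (⨆ g ∈ 𝔏.SuppL ∩ 𝔏.SuppA, 𝔏.smulSub g⁻¹ g) ⊔ (⨆ g ∈ 𝔏.SuppL, 𝔏.bracketSub g⁻¹ g)

/-- An ideal of the Lie-Rinehart algebra `(L,A)`: a Lie ideal which is an `A`-submodule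
and satisfies `ρ(I)(A)L ⊆ I`. -/
def IsIdealL (I : Submodule F L) : Prop :=
  (∀ (x : L), ∀ y ∈ I, ⁅x, y⁆ ∈ I) ∧ (∀ (a : A), ∀ y ∈ I, a • y ∈ I) ∧
  (∀ v ∈ I, ∀ (a : A) (w : L), (𝔏.ρ v a) • w ∈ I)

/-- A graded submodule of `L`. -/
def IsGradedL (I : Submodule F L) : Prop := I = ⨆ k : G, I ⊓ 𝔏.𝓛 k

/-- A graded ideal of `(L,A)`. -/
def IsGradedIdealL (I : Submodule F L) : Prop := 𝔏.IsIdealL I ∧ 𝔏.IsGradedL I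

/-- `(L,A)` is gr-simple. -/
def GrSimpleL : Prop :=
  (∃ v w : L, ⁅v, w⁆ ≠ 0) ∧ (∃ a b : A, a * b ≠ 0) ∧ (∃ (a : A) (v : L), a • v ≠ 0) ∧
  ∀ I : Submodule F L, 𝔏.IsGradedIdealL I → I = ⊥ ∨ I = ⊤ ∨ I = LinearMap.ker 𝔏.ρ

/-- The span of products `A_h · A_g`. -/
def mulSub (h g : G) : Submodule F A :=
  Submodule.span F {x | ∃ a ∈ 𝔏.𝓐 h, ∃ b ∈ 𝔏.𝓐 g, x = a * b}

/-- The span of `ρ(L_h)(A_g)`. -/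
def rhoSub (h g : G) : Submodule F A :=
  Submodule.span F {x | ∃ v ∈ 𝔏.𝓛 h, ∃ a ∈ 𝔏.𝓐 g, x = 𝔏.ρ v a}

/-- `A_{[g],1}`. -/
def A1class (g : G) : Submodule F A :=
  (⨆ g' ∈ {g' | g' ∈ 𝔏.SuppA ∧ 𝔏.LambdaConnected g g' ∧ g' ∈ 𝔏.SuppL}, 𝔏.rhoSub g'⁻¹ g') ⊔
  (⨆ g' ∈ {g' | g' ∈ 𝔏.SuppA ∧ 𝔏.LambdaConnected g g'}, 𝔏.mulSub g'⁻¹ g')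

/-- `A_{[g]}`. -/
def Aclass (g : G) : Submodule F A :=
  ⨆ g' ∈ {g' | g' ∈ 𝔏.SuppA ∧ 𝔏.LambdaConnected g g'}, 𝔏.𝓐 g'

/-- `𝒜_{[g]} = A_{[g],1} ⊕ A_{[g]}`. -/
def calA (g : G) : Submodule F A := 𝔏.A1class g ⊔ 𝔏.Aclass g

/-- `Σ_{g ∈ Λ_G ∩ Σ_G} ρ(L_{g⁻¹})(A_g) + Σ_{g ∈ Λ_G} A_{g⁻¹} A_g`. -/
def A1full : Submodule F A :=
  (⨆ g ∈ 𝔏.SuppA ∩ 𝔏.SuppL, 𝔏.rhoSub g⁻¹ g) ⊔ (⨆ g ∈ 𝔏.SuppA, 𝔏.mulSub g⁻¹ g)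

/-- An ideal of the commutative associative algebra `A`. -/
def IsIdealA (I : Submodule F A) : Prop := ∀ (a : A), ∀ x ∈ I, a * x ∈ I

/-- A graded submodule of `A`. -/
def IsGradedA (I : Submodule F A) : Prop := I = ⨆ k : G, I ⊓ 𝔏.𝓐 k

/-- A graded ideal of `A`. -/
def IsGradedIdealA (I : Submodule F A) : Prop := IsIdealA I ∧ 𝔏.IsGradedA I

/-- `A` is gr-simple. -/
def GrSimpleA : Prop :=
  (∃ a b : A, a * b ≠ 0) ∧
  ∀ I : Submodule F A, 𝔏.IsGradedIdealA I → I = ⊥ ∨ I = ⊤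

/-- The graded Lie-Rinehart algebra `(L,A)` is tight. -/
def Tight : Prop :=
  (∀ v : L, (∀ w : L, ⁅v, w⁆ = 0) → 𝔏.ρ v = 0 → v = 0) ∧
  (∀ v : L, (∀ a : A, a • v = 0) → v = 0) ∧
  (∀ a : A, (∀ b : A, a * b = 0) → a = 0) ∧
  Submodule.span F {x : A | ∃ b c : A, x = b * c} = ⊤ ∧
  Submodule.span F {x : L | ∃ (a : A) (w : L), x = a • w} = ⊤ ∧
  𝔏.𝓛 1 = 𝔏.L1full ∧ 𝔏.𝓐 1 = 𝔏.A1full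

/-- `(L,A)` is of maximal length. -/
def MaximalLength : Prop :=
  (∀ g ∈ 𝔏.SuppL, Module.rank F (𝔏.𝓛 g) = 1) ∧ (∀ k ∈ 𝔏.SuppA, Module.rank F (𝔏.𝓐 k) = 1)

/-- `(L,A)` is `G`-multiplicative. -/
def GMultiplicative : Prop :=
  (∀ g ∈ 𝔏.SuppL, ∀ h ∈ 𝔏.SuppL, g * h ∈ 𝔏.SuppL → ∃ v ∈ 𝔏.𝓛 g, ∃ w ∈ 𝔏.𝓛 h, ⁅v, w⁆ ≠ 0) ∧
  (∀ k ∈ 𝔏.SuppA, ∀ g ∈ 𝔏.SuppL, k * g ∈ 𝔏.SuppL → ∃ a ∈ 𝔏.𝓐 k, ∃ v ∈ 𝔏.𝓛 g, a • v ≠ 0) ∧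
  (∀ k ∈ 𝔏.SuppA, ∀ j ∈ 𝔏.SuppA, k * j ∈ 𝔏.SuppA → ∃ a ∈ 𝔏.𝓐 k, ∃ b ∈ 𝔏.𝓐 j, a * b ≠ 0)

/-- A gr-simple ideal of `(L,A)`: a graded ideal with nonzero bracket whose only graded
ideals of `L` contained in it are `0`, itself and its intersection with `Ker ρ`. -/
def GrSimpleIdealL (I : Submodule F L) : Prop :=
  𝔏.IsGradedIdealL I ∧ (∃ x ∈ I, ∃ y ∈ I, ⁅x, y⁆ ≠ 0) ∧
  ∀ J : Submodule F L, 𝔏.IsGradedIdealL J → J ≤ I →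
    (J = ⊥ ∨ J = I ∨ J = LinearMap.ker 𝔏.ρ ⊓ I)

end GradedLieRinehart

open GradedLieRinehart

variable {F : Type*} [Field F] {G : Type*} [CommGroup G] [DecidableEq G]
  {A : Type*} [CommRing A] [Algebra F A]
  {L : Type*} [LieRing L] [LieAlgebra F L] [Module A L] [IsScalarTower F A L]

section ChainLemmas
variable {G : Type*} [CommGroup G]

/-- Auxiliary inductive description of chain-connectedness. -/
inductive MReach (M : Set G) (g : G) : G → Prop
  | single : g ∈ M → MReach M g g
  | cons {p k : G} : MReach M g p → p ∈ M → k ∈ M → MReach M g (p * k)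

namespace MReach

lemma trans' {M : Set G} {g p r : G} (h1 : MReach M g p) (hp : p ∈ M)
    (h2 : MReach M p r) : MReach M g r := by
  induction h2 with
  | single _ => exact h1
  | cons h hs hk ih => exact ih.cons hs hk

lemma inv' {M : Set G} (hinv : ∀ k ∈ M, k⁻¹ ∈ M) {g p : G} (h : MReach M g p) :
    MReach M g⁻¹ p⁻¹ := by
  induction h with
  | single hk => exact single (hinv _ hk)
  | cons h hs hk ih =>
      have := ih.cons (hinv _ hs) (hinv _ hk)
      rwa [← mul_inv] at this

lemma symm' {M : Set G} (hinv : ∀ k ∈ M, k⁻¹ ∈ M) {g p : G} (h : MReach M g p) :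
    p ∈ M → MReach M p g ∨ MReach M p g⁻¹ := by
  induction h with
  | single hk => intro hp; exact Or.inl (single hp)
  | @cons s k h hs hk ih =>
      intro hp
      have h1 : MReach M (s * k) s := by
        have := (single hp).cons hp (hinv _ hk)
        rwa [mul_inv_cancel_right] at this
      rcases ih hs with h2 | h2
      · exact Or.inl (h1.trans' hs h2)
      · exact Or.inr (h1.trans' hs h2)

end MReach

lemma mreach_of_chain {M : Set G} {g : G} :
    ∀ c : List G, c ≠ [] → c.head? = some g → (∀ k ∈ c, k ∈ M) →
    (∀ i : ℕ, 0 < i → i < c.length → (c.take i).prod ∈ M) → MReach M g c.prod := by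
  intro c
  induction c using List.reverseRecOn with
  | nil => simp
  | append_singleton l k ih =>
      intro _ hhead hmem hpre
      by_cases hl : l = []
      · subst hl
        simp only [List.nil_append, List.head?_cons] at hhead
        obtain rfl : k = g := by simpa using hhead
        simpa using MReach.single (by simpa using hmem k (by simp))
      · have hhead' : l.head? = some g := by
          rwa [List.head?_append_of_ne_nil _ hl] at hhead
        have hlen : 0 < l.length := List.length_pos_iff.mpr hl
        have hmem' : ∀ x ∈ l, x ∈ M := fun x hx => hmem x (by simp [hx])
        have hpre' : ∀ i : ℕ, 0 < i → i < l.length → (l.take i).prod ∈ M := by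
          intro i h0 hi
          have := hpre i h0 (by simp; omega)
          rwa [List.take_append_of_le_length (le_of_lt hi)] at this
        have hL : MReach M g l.prod := ih hl hhead' hmem' hpre'
        have hlM : l.prod ∈ M := by
          have := hpre l.length hlen (by simp)
          rwa [List.take_append_of_le_length le_rfl, List.take_length] at this
        have := hL.cons hlM (hmem k (by simp))
        simpa using this

lemma chain_of_mreach {M : Set G} {g p : G} (h : MReach M g p) :
    ∃ c : List G, c ≠ [] ∧ c.head? = some g ∧ (∀ k ∈ c, k ∈ M) ∧
    (∀ i : ℕ, 0 < i → i < c.length → (c.take i).prod ∈ M) ∧ c.prod = p := by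
  induction h with
  | single hk =>
      exact ⟨[g], by simp, by simp, by simpa using hk,
        by intro i h0 hi; simp at hi; omega, by simp⟩
  | @cons s k h hs hk ih =>
      obtain ⟨c, hne, hhead, hmem, hpre, hprod⟩ := ih
      refine ⟨c ++ [k], by simp, ?_, ?_, ?_, ?_⟩
      · rwa [List.head?_append_of_ne_nil _ hne]
      · intro x hx
        rcases List.mem_append.mp hx with hx | hx
        · exact hmem x hx
        · simp at hx; exact hx ▸ hk
      · intro i h0 hi
        simp only [List.length_append, List.length_singleton] at hi
        have hile : i ≤ c.length := by omega
        rw [List.take_append_of_le_length hile]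
        rcases lt_or_eq_of_le hile with hlt | heq
        · exact hpre i h0 hlt
        · rw [heq, List.take_length, hprod]; exact hs
      · rw [List.prod_append, hprod]; simp

lemma chainConnected_iff_mreach {M : Set G} {g g' : G} :
    ChainConnected M ∅ g g' ↔ ∃ p, MReach M g p ∧ (p = g' ∨ p = g'⁻¹) := by
  constructor
  · rintro ⟨c, hne, hhead, hmem, hpre, hprod⟩
    exact ⟨c.prod, mreach_of_chain c hne hhead (by simpa using hmem) hpre, hprod⟩
  · rintro ⟨p, hp, hpq⟩
    obtain ⟨c, hne, hhead, hmem, hpre, hprod⟩ := chain_of_mreach hp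
    exact ⟨c, hne, hhead, fun k hk => Set.mem_union_left _ (hmem k hk), hpre, hprod ▸ hpq⟩

variable {M : Set G}

lemma cc_inv_right {g g' : G} (h : ChainConnected M ∅ g g') : ChainConnected M ∅ g g'⁻¹ := by
  rw [chainConnected_iff_mreach] at h ⊢
  obtain ⟨p, hp, hpq⟩ := h
  exact ⟨p, hp, by rwa [inv_inv, or_comm]⟩

variable (hinv : ∀ k ∈ M, k⁻¹ ∈ M)
include hinv

lemma cc_step {g g' k : G} (h : ChainConnected M ∅ g g') (hg' : g' ∈ M) (hk : k ∈ M) :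
    ChainConnected M ∅ g (g' * k) := by
  rw [chainConnected_iff_mreach] at h ⊢
  obtain ⟨p, hp, hpq⟩ := h
  rcases hpq with rfl | rfl
  · exact ⟨p * k, hp.cons hg' hk, Or.inl rfl⟩
  · refine ⟨(g' * k)⁻¹, ?_, Or.inr rfl⟩
    rw [mul_inv]
    exact hp.cons (hinv _ hg') (hinv _ hk)

lemma cc_symm {g g' : G} (h : ChainConnected M ∅ g g') (hg' : g' ∈ M) :
    ChainConnected M ∅ g' g := by
  rw [chainConnected_iff_mreach] at h ⊢
  obtain ⟨p, hp, hpq⟩ := h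
  rcases hpq with rfl | rfl
  · rcases hp.symm' hinv hg' with h2 | h2
    · exact ⟨g, h2, Or.inl rfl⟩
    · exact ⟨g⁻¹, h2, Or.inr rfl⟩
  · rcases hp.symm' hinv (hinv _ hg') with h2 | h2
    · exact ⟨g⁻¹, by simpa using h2.inv' hinv, Or.inr rfl⟩
    · exact ⟨g, by simpa using h2.inv' hinv, Or.inl rfl⟩

lemma cc_trans {g g' g'' : G} (h1 : ChainConnected M ∅ g g') (hg' : g' ∈ M)
    (h2 : ChainConnected M ∅ g' g'') : ChainConnected M ∅ g g'' := by
  rw [chainConnected_iff_mreach] at h1 h2 ⊢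
  obtain ⟨p, hp, hpq⟩ := h1
  obtain ⟨q, hq, hqr⟩ := h2
  rcases hpq with rfl | rfl
  · exact ⟨q, hp.trans' hg' hq, hqr⟩
  · refine ⟨q⁻¹, hp.trans' (hinv _ hg') (by simpa using hq.inv' hinv), ?_⟩
    rcases hqr with rfl | rfl
    · exact Or.inr rfl
    · exact Or.inl (by simp)

lemma cc_link {g h t : G} (h1 : ChainConnected M ∅ g t) (h2 : ChainConnected M ∅ h t)
    (ht : t ∈ M) : ChainConnected M ∅ g h :=
  cc_trans hinv h1 ht (cc_symm hinv h2 ht)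

end ChainLemmas
section AuxCalA

variable {F : Type*} [Field F] {G : Type*} [CommGroup G] [DecidableEq G]
  {A : Type*} [CommRing A] [Algebra F A]
  {L : Type*} [LieRing L] [LieAlgebra F L] [Module A L] [IsScalarTower F A L]

namespace GradedLieRinehart

variable (𝔏 : GradedLieRinehart F G A L)

lemma glr_hinv : ∀ k ∈ 𝔏.Lpm ∪ 𝔏.Spm, k⁻¹ ∈ 𝔏.Lpm ∪ 𝔏.Spm := by
  rintro k (hk | hk)
  · rcases hk with hk | hk
    · exact Or.inl (Or.inr (by simpa using hk))
    · exact Or.inl (Or.inl hk)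
  · rcases hk with hk | hk
    · exact Or.inr (Or.inr (by simpa using hk))
    · exact Or.inr (Or.inl hk)

lemma suppA_subset_main : 𝔏.SuppA ⊆ 𝔏.Lpm ∪ 𝔏.Spm := fun _ hk => Or.inl (Or.inl hk)

lemma suppL_subset_main : 𝔏.SuppL ⊆ 𝔏.Lpm ∪ 𝔏.Spm := fun _ hk => Or.inr (Or.inl hk)

lemma mem_suppA_of {a : A} {k : G} (ha : a ∈ 𝔏.𝓐 k) (h0 : a ≠ 0) (h1 : k ≠ 1) :
    k ∈ 𝔏.SuppA :=
  ⟨h1, fun hb => h0 ((Submodule.mem_bot F).mp (hb ▸ ha))⟩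

lemma mem_suppL_of {v : L} {k : G} (hv : v ∈ 𝔏.𝓛 k) (h0 : v ≠ 0) (h1 : k ≠ 1) :
    k ∈ 𝔏.SuppL :=
  ⟨h1, fun hb => h0 ((Submodule.mem_bot F).mp (hb ▸ hv))⟩

variable {𝔏}

lemma lc_symm {g g' : G} (h : 𝔏.LambdaConnected g g') (hg' : g' ∈ 𝔏.Lpm ∪ 𝔏.Spm) :
    𝔏.LambdaConnected g' g :=
  cc_symm 𝔏.glr_hinv h hg'

lemma lc_trans {g g' g'' : G} (h1 : 𝔏.LambdaConnected g g') (hg' : g' ∈ 𝔏.Lpm ∪ 𝔏.Spm)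
    (h2 : 𝔏.LambdaConnected g' g'') : 𝔏.LambdaConnected g g'' :=
  cc_trans 𝔏.glr_hinv h1 hg' h2

lemma lc_step {g g' k : G} (h : 𝔏.LambdaConnected g g') (hg' : g' ∈ 𝔏.Lpm ∪ 𝔏.Spm)
    (hk : k ∈ 𝔏.Lpm ∪ 𝔏.Spm) : 𝔏.LambdaConnected g (g' * k) :=
  cc_step 𝔏.glr_hinv h hg' hk

lemma lc_inv_right {g g' : G} (h : 𝔏.LambdaConnected g g') : 𝔏.LambdaConnected g g'⁻¹ :=
  cc_inv_right h

lemma lc_link {g h t : G} (h1 : 𝔏.LambdaConnected g t) (h2 : 𝔏.LambdaConnected h t)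
    (ht : t ∈ 𝔏.Lpm ∪ 𝔏.Spm) : 𝔏.LambdaConnected g h :=
  cc_link 𝔏.glr_hinv h1 h2 ht

section Vanishing

variable {g h : G} (hg : g ∈ 𝔏.SuppA) (hh : h ∈ 𝔏.SuppA)
  (hne : ¬ 𝔏.LambdaConnected g h)
  {g' h' : G} (hg1 : g' ∈ 𝔏.SuppA) (hg2 : 𝔏.LambdaConnected g g')
  (hh1 : h' ∈ 𝔏.SuppA) (hh2 : 𝔏.LambdaConnected h h')

include hg hh hne hg1 hg2 hh1 hh2

/-- `A_{g'} A_{h'} = 0` for `g' ∈ [g]`, `h' ∈ [h]`. -/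
lemma ZA : ∀ a ∈ 𝔏.𝓐 g', ∀ b ∈ 𝔏.𝓐 h', a * b = 0 := by
  intro a ha b hb
  by_contra h0
  have hm : a * b ∈ 𝔏.𝓐 (g' * h') := 𝔏.mul_mem ha hb
  apply hne
  by_cases h1 : g' * h' = 1
  · have hh'' : h' = g'⁻¹ := eq_inv_of_mul_eq_one_left (by rwa [mul_comm] at h1)
    have : 𝔏.LambdaConnected h g' := by
      have := lc_inv_right (hh'' ▸ hh2)
      rwa [inv_inv] at this
    exact lc_link hg2 this (𝔏.suppA_subset_main hg1)
  · have hs : g' * h' ∈ 𝔏.SuppA := 𝔏.mem_suppA_of hm h0 h1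
    have h2 : 𝔏.LambdaConnected g (g' * h') :=
      lc_step hg2 (𝔏.suppA_subset_main hg1) (𝔏.suppA_subset_main hh1)
    have h3 : 𝔏.LambdaConnected h (g' * h') := by
      have := lc_step hh2 (𝔏.suppA_subset_main hh1) (𝔏.suppA_subset_main hg1)
      rwa [mul_comm] at this
    exact lc_link h2 h3 (𝔏.suppA_subset_main hs)

/-- `ρ(L_{g'⁻¹}) A_{h'} = 0` for `g' ∈ [g]`, `h' ∈ [h]`. -/
lemma ZR : ∀ v ∈ 𝔏.𝓛 g'⁻¹, ∀ b ∈ 𝔏.𝓐 h', 𝔏.ρ v b = 0 := by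
  intro v hv b hb
  by_contra h0
  have hm : 𝔏.ρ v b ∈ 𝔏.𝓐 (g'⁻¹ * h') := 𝔏.rho_mem hv hb
  apply hne
  by_cases h1 : g'⁻¹ * h' = 1
  · have hh'' : h' = g' := by
      have := inv_eq_of_mul_eq_one_left (by rwa [mul_comm] at h1)
      simpa using this.symm
    exact lc_link hg2 (hh'' ▸ hh2) (𝔏.suppA_subset_main hg1)
  · have hs : g'⁻¹ * h' ∈ 𝔏.SuppA := 𝔏.mem_suppA_of hm h0 h1
    have h2 : 𝔏.LambdaConnected g h' := by
      have := lc_step hg2 (𝔏.suppA_subset_main hg1) (𝔏.suppA_subset_main hs)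
      rwa [mul_inv_cancel_left] at this
    exact lc_link h2 hh2 (𝔏.suppA_subset_main hh1)

/-- `[L_{g'⁻¹}, L_{h'⁻¹}] = 0` for `g' ∈ [g]`, `h' ∈ [h]`. -/
lemma ZB : ∀ v ∈ 𝔏.𝓛 g'⁻¹, ∀ w ∈ 𝔏.𝓛 h'⁻¹, ⁅v, w⁆ = 0 := by
  intro v hv w hw
  by_contra h0
  have hm : ⁅v, w⁆ ∈ 𝔏.𝓛 (g'⁻¹ * h'⁻¹) := 𝔏.bracket_mem hv hw
  apply hne
  by_cases h1 : g'⁻¹ * h'⁻¹ = 1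
  · have hh'' : h' = g'⁻¹ := by
      have h2 := eq_inv_of_mul_eq_one_left h1
      simp only [inv_inv] at h2
      exact h2.symm
    have : 𝔏.LambdaConnected h g' := by
      have := lc_inv_right (hh'' ▸ hh2)
      rwa [inv_inv] at this
    exact lc_link hg2 this (𝔏.suppA_subset_main hg1)
  · have hs : g'⁻¹ * h'⁻¹ ∈ 𝔏.SuppL := 𝔏.mem_suppL_of hm h0 h1
    have h2 : 𝔏.LambdaConnected g h'⁻¹ := by
      have := lc_step hg2 (𝔏.suppA_subset_main hg1) (𝔏.suppL_subset_main hs)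
      rwa [mul_inv_cancel_left] at this
    have h3 : 𝔏.LambdaConnected g h' := by
      have := lc_inv_right h2; rwa [inv_inv] at this
    exact lc_link h3 hh2 (𝔏.suppA_subset_main hh1)

/-- `ρ(L_{g'⁻¹}) ρ(L_{h'⁻¹}) A_{h'} = 0`. -/
lemma Zrr : ∀ v ∈ 𝔏.𝓛 g'⁻¹, ∀ w ∈ 𝔏.𝓛 h'⁻¹, ∀ b ∈ 𝔏.𝓐 h', 𝔏.ρ v (𝔏.ρ w b) = 0 := by
  intro v hv w hw b hb
  have hbr : ⁅v, w⁆ = (0 : L) := ZB hg hh hne hg1 hg2 hh1 hh2 v hv w hw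
  have hvb : 𝔏.ρ v b = 0 := ZR hg hh hne hg1 hg2 hh1 hh2 v hv b hb
  have key : 𝔏.ρ ⁅v, w⁆ b = 𝔏.ρ v (𝔏.ρ w b) - 𝔏.ρ w (𝔏.ρ v b) := by
    rw [𝔏.ρ_bracket]
    rfl
  rw [hbr] at key
  simp only [map_zero, Derivation.zero_apply] at key
  rw [hvb, map_zero] at key
  simpa using key.symm

/-- `ρ(L_{g'⁻¹})(A_{g'}) · A_{h'} = 0`. -/
lemma P2 : ∀ v ∈ 𝔏.𝓛 g'⁻¹, ∀ a ∈ 𝔏.𝓐 g', ∀ b ∈ 𝔏.𝓐 h', 𝔏.ρ v a * b = 0 := by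
  intro v hv a ha b hb
  have hab : a * b = 0 := ZA hg hh hne hg1 hg2 hh1 hh2 a ha b hb
  have hvb : 𝔏.ρ v b = 0 := ZR hg hh hne hg1 hg2 hh1 hh2 v hv b hb
  have := (𝔏.ρ v).leibniz a b
  rw [hab, map_zero, hvb, smul_eq_mul, smul_eq_mul, mul_zero] at this
  have h6 : b * 𝔏.ρ v a = 0 := by simpa using this.symm
  rwa [mul_comm] at h6

/-- `ρ(L_{g'⁻¹})(A_{g'}) · ρ(L_{h'⁻¹})(A_{h'}) = 0`. -/
lemma P4 : ∀ v ∈ 𝔏.𝓛 g'⁻¹, ∀ a ∈ 𝔏.𝓐 g', ∀ w ∈ 𝔏.𝓛 h'⁻¹, ∀ b ∈ 𝔏.𝓐 h',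
    𝔏.ρ v a * 𝔏.ρ w b = 0 := by
  intro v hv a ha w hw b hb
  have hne' : ¬ 𝔏.LambdaConnected h g := fun hc => hne (lc_symm hc (𝔏.suppA_subset_main hg))
  have hac : a * 𝔏.ρ w b = 0 := by
    have := P2 hh hg hne' hh1 hh2 hg1 hg2 w hw b hb a ha
    rwa [mul_comm] at this
  have hrr : 𝔏.ρ v (𝔏.ρ w b) = 0 := Zrr hg hh hne hg1 hg2 hh1 hh2 v hv w hw b hb
  have := (𝔏.ρ v).leibniz a (𝔏.ρ w b)
  rw [hac, map_zero, hrr, smul_eq_mul, smul_eq_mul, mul_zero] at this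
  have h5 : 𝔏.ρ w b * 𝔏.ρ v a = 0 := by simpa using this.symm
  rwa [mul_comm] at h5

end Vanishing

/-- Generators of `𝒜_{[g]}`. -/
def Gen (𝔏 : GradedLieRinehart F G A L) (g : G) (x : A) : Prop :=
  (∃ g', (g' ∈ 𝔏.SuppA ∧ 𝔏.LambdaConnected g g' ∧ g' ∈ 𝔏.SuppL) ∧
    ∃ v ∈ 𝔏.𝓛 g'⁻¹, ∃ a ∈ 𝔏.𝓐 g', x = 𝔏.ρ v a) ∨
  (∃ g', (g' ∈ 𝔏.SuppA ∧ 𝔏.LambdaConnected g g') ∧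
    ∃ a₁ ∈ 𝔏.𝓐 g'⁻¹, ∃ a₂ ∈ 𝔏.𝓐 g', x = a₁ * a₂) ∨
  (∃ g', (g' ∈ 𝔏.SuppA ∧ 𝔏.LambdaConnected g g') ∧ x ∈ 𝔏.𝓐 g')

lemma gen_mul_gen {g h : G} (hg : g ∈ 𝔏.SuppA) (hh : h ∈ 𝔏.SuppA)
    (hne : ¬ 𝔏.LambdaConnected g h) {x y : A} (hx : Gen 𝔏 g x) (hy : Gen 𝔏 h y) :
    x * y = 0 := by
  have hne' : ¬ 𝔏.LambdaConnected h g := fun hc => hne (lc_symm hc (𝔏.suppA_subset_main hg))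
  rcases hx with ⟨g', ⟨hg1, hg2, _⟩, v, hv, a, ha, rfl⟩ |
    ⟨g', ⟨hg1, hg2⟩, a₁, ha₁, a₂, ha₂, rfl⟩ | ⟨g', ⟨hg1, hg2⟩, ha⟩
  · -- x = ρ v a
    rcases hy with ⟨h', ⟨hh1, hh2, _⟩, w, hw, b, hb, rfl⟩ |
      ⟨h', ⟨hh1, hh2⟩, b₁, hb₁, b₂, hb₂, rfl⟩ | ⟨h', ⟨hh1, hh2⟩, hb⟩
    · exact P4 hg hh hne hg1 hg2 hh1 hh2 v hv a ha w hw b hb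
    · have h1 : 𝔏.ρ v a * b₂ = 0 := P2 hg hh hne hg1 hg2 hh1 hh2 v hv a ha b₂ hb₂
      calc 𝔏.ρ v a * (b₁ * b₂) = b₁ * (𝔏.ρ v a * b₂) := by ring
        _ = 0 := by rw [h1, mul_zero]
    · exact P2 hg hh hne hg1 hg2 hh1 hh2 v hv a ha y hb
  · -- x = a₁ * a₂
    rcases hy with ⟨h', ⟨hh1, hh2, _⟩, w, hw, b, hb, rfl⟩ |
      ⟨h', ⟨hh1, hh2⟩, b₁, hb₁, b₂, hb₂, rfl⟩ | ⟨h', ⟨hh1, hh2⟩, hb⟩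
    · have h1 : 𝔏.ρ w b * a₂ = 0 := P2 hh hg hne' hh1 hh2 hg1 hg2 w hw b hb a₂ ha₂
      calc a₁ * a₂ * 𝔏.ρ w b = a₁ * (𝔏.ρ w b * a₂) := by ring
        _ = 0 := by rw [h1, mul_zero]
    · have h1 : a₂ * b₂ = 0 := ZA hg hh hne hg1 hg2 hh1 hh2 a₂ ha₂ b₂ hb₂
      calc a₁ * a₂ * (b₁ * b₂) = a₁ * b₁ * (a₂ * b₂) := by ring
        _ = 0 := by rw [h1, mul_zero]
    · have h1 : a₂ * y = 0 := ZA hg hh hne hg1 hg2 hh1 hh2 a₂ ha₂ y hb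
      calc a₁ * a₂ * y = a₁ * (a₂ * y) := by ring
        _ = 0 := by rw [h1, mul_zero]
  · -- x ∈ 𝓐 g'
    rcases hy with ⟨h', ⟨hh1, hh2, _⟩, w, hw, b, hb, rfl⟩ |
      ⟨h', ⟨hh1, hh2⟩, b₁, hb₁, b₂, hb₂, rfl⟩ | ⟨h', ⟨hh1, hh2⟩, hb⟩
    · have h1 : 𝔏.ρ w b * x = 0 := P2 hh hg hne' hh1 hh2 hg1 hg2 w hw b hb x ha
      rwa [mul_comm] at h1
    · have h1 : x * b₂ = 0 := ZA hg hh hne hg1 hg2 hh1 hh2 x ha b₂ hb₂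
      calc x * (b₁ * b₂) = b₁ * (x * b₂) := by ring
        _ = 0 := by rw [h1, mul_zero]
    · exact ZA hg hh hne hg1 hg2 hh1 hh2 x ha y hb

lemma calA_le_of_gen {g : G} (P : Submodule F A) (hP : ∀ x, Gen 𝔏 g x → x ∈ P) :
    𝔏.calA g ≤ P := by
  rw [calA]
  apply sup_le
  · rw [A1class]
    apply sup_le
    · refine iSup₂_le fun g' hg' => ?_
      rw [rhoSub]
      rw [Submodule.span_le]
      rintro x ⟨v, hv, a, ha, rfl⟩
      exact hP _ (Or.inl ⟨g', hg', v, by simpa using hv, a, ha, rfl⟩)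
    · refine iSup₂_le fun g' hg' => ?_
      rw [mulSub]
      rw [Submodule.span_le]
      rintro x ⟨a₁, ha₁, a₂, ha₂, rfl⟩
      exact hP _ (Or.inr (Or.inl ⟨g', hg', a₁, by simpa using ha₁, a₂, ha₂, rfl⟩))
  · rw [Aclass]
    refine iSup₂_le fun g' hg' => ?_
    intro x hx
    exact hP _ (Or.inr (Or.inr ⟨g', hg', hx⟩))

end GradedLieRinehart

end AuxCalA

/-- If `[g] ≠ [h]` then `𝒜_{[g]} · 𝒜_{[h]} = 0`. -/
theorem calA_mul_ne (𝔏 : GradedLieRinehart F G A L) {g h : G}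
    (hg : g ∈ 𝔏.SuppA) (hh : h ∈ 𝔏.SuppA) (hne : ¬ 𝔏.LambdaConnected g h) :
    ∀ x ∈ 𝔏.calA g, ∀ y ∈ 𝔏.calA h, x * y = 0 := by
  intro x hx y hy
  have key : ∀ x', Gen 𝔏 g x' → x' * y = 0 := by
    intro x' hx'
    have hle : 𝔏.calA h ≤ LinearMap.ker (LinearMap.mulLeft F x') := by
      apply calA_le_of_gen
      intro y' hy'
      simpa [LinearMap.mem_ker] using gen_mul_gen hg hh hne hx' hy'
    simpa [LinearMap.mem_ker] using hle hy
  have hle : 𝔏.calA g ≤ LinearMap.ker (LinearMap.mulRight F y) := by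
    apply calA_le_of_gen
    intro x' hx'
    simpa [LinearMap.mem_ker] using key x' hx'
  simpa [LinearMap.mem_ker] using hle hx
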